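/- Erdős–Heilbronn conjecture (da Silva–Hamidoune theorem): if p is a prime and A is a nonempty subset of ℤ/pℤ, then the restricted sumset 2^∧A = {a + b : a, b ∈ A, a ≠ b} satisfies |2^∧A| ≥ min{p, 2|A| − 3}. -/

import Mathlib

open Polynomial Finset

variable {R : Type*} [CommRing R]

noncomputable def cf (h : R[X][X]) (i j : ℕ) : R := (h.coeff j).coeff i

lemma cf_mul_factor (a : R) (P : R[X][X]) (i j : ℕ) :
    cf ((C X + X - C (C a)) * P) i j
      = (if i = 0 then 0 else cf P (i-1) j) + (if j = 0 then 0 else cf P i (j-1))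
        - a * cf P i j := by
  unfold cf
  rw [sub_mul, add_mul, coeff_sub, coeff_add, coeff_C_mul, Polynomial.coeff_sub,
    Polynomial.coeff_add, Polynomial.coeff_C_mul]
  congr 1
  congr 1
  · cases i with
    | zero => simp
    | succ n => simp [Polynomial.coeff_X_mul]
  · cases j with
    | zero => simp [Polynomial.mul_coeff_zero]
    | succ n => simp [Polynomial.coeff_X_mul]
  · rw [Polynomial.coeff_C_mul]

lemma cf_prod_gt (S : Finset R) (i j : ℕ) (h : S.card < i + j) :
    cf (∏ c ∈ S, (C X + X - C (C c))) i j = 0 := by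
  classical
  induction S using Finset.induction generalizing i j with
  | empty =>
    simp only [Finset.prod_empty, card_empty] at *
    unfold cf
    rcases Nat.eq_zero_or_pos j with hj | hj
    · subst hj
      simp [Polynomial.coeff_one, show i ≠ 0 by omega]
    · rw [Polynomial.coeff_one, if_neg (by omega)]; simp
  | @insert a S ha ih =>
    rw [Finset.prod_insert ha, cf_mul_factor]
    rw [Finset.card_insert_of_notMem ha] at h
    have h1 : ∀ i' j', S.card < i' + j' → cf (∏ c ∈ S, (C X + X - C (C c))) i' j' = 0 := ih
    rw [h1 i j (by omega)]
    rcases Nat.eq_zero_or_pos i with hi | hi <;> rcases Nat.eq_zero_or_pos j with hj | hj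
    · omega
    · subst hi
      rw [if_pos rfl, if_neg (by omega), h1 0 (j-1) (by omega)]; ring
    · rw [if_neg (by omega), if_pos hj, h1 (i-1) j (by omega)]; ring
    · rw [if_neg (by omega), if_neg (by omega), h1 (i-1) j (by omega), h1 i (j-1) (by omega)]; ring

lemma cf_prod_eq (S : Finset R) (i j : ℕ) (h : i + j = S.card) :
    cf (∏ c ∈ S, (C X + X - C (C c))) i j = (S.card.choose i : R) := by
  classical
  induction S using Finset.induction generalizing i j with
  | empty =>
    simp only [Finset.prod_empty, card_empty] at *
    obtain ⟨rfl, rfl⟩ : i = 0 ∧ j = 0 := by omega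
    unfold cf; simp
  | @insert a S ha ih =>
    rw [Finset.prod_insert ha, cf_mul_factor]
    rw [Finset.card_insert_of_notMem ha] at h ⊢
    rw [cf_prod_gt S i j (by omega)]
    rcases Nat.eq_zero_or_pos i with hi | hi <;> rcases Nat.eq_zero_or_pos j with hj | hj
    · omega
    · subst hi
      rw [if_pos rfl, if_neg (by omega), ih 0 (j-1) (by omega)]; simp
    · subst hj
      rw [if_neg (by omega), if_pos rfl, ih (i-1) 0 (by omega)]
      have : i = S.card + 1 := by omega
      subst this
      simp [Nat.choose_self]
    · rw [if_neg (by omega), if_neg (by omega), ih (i-1) j (by omega), ih i (j-1) (by omega)]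
      have hi' : ∃ i', i = i' + 1 := ⟨i-1, by omega⟩
      obtain ⟨i', rfl⟩ := hi'
      rw [mul_zero, sub_zero, Nat.add_sub_cancel]
      rw [Nat.choose_succ_succ]
      push_cast; ring

lemma cf_mul_factor' (P : R[X][X]) (i j : ℕ) :
    cf ((C X - X) * P) i j
      = (if i = 0 then 0 else cf P (i-1) j) - (if j = 0 then 0 else cf P i (j-1)) := by
  unfold cf
  rw [sub_mul, coeff_sub, coeff_C_mul, Polynomial.coeff_sub]
  congr 1
  · cases i with
    | zero => simp
    | succ n => simp [Polynomial.coeff_X_mul]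
  · cases j with
    | zero => simp [Polynomial.mul_coeff_zero]
    | succ n => simp [Polynomial.coeff_X_mul]

lemma choose_cast_ne {p m r : ℕ} [Fact p.Prime] (hrm : r + 1 ≤ m) (hmp : m < p)
    (hm2r : m ≠ 2*r+1) : ((m.choose r : ZMod p)) ≠ (m.choose (r+1) : ZMod p) := by
  intro heq
  have hp := (Fact.out : p.Prime)
  have hch : ¬ p ∣ m.choose r := by
    intro hd
    have h1 : m.choose r * (Nat.factorial r * Nat.factorial (m - r)) = Nat.factorial m := by
      rw [← mul_assoc]; exact Nat.choose_mul_factorial_mul_factorial (by omega)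
    have : p ∣ Nat.factorial m := h1 ▸ hd.mul_right _
    have := (Nat.Prime.dvd_factorial hp).mp this
    omega
  have hch0 : (m.choose r : ZMod p) ≠ 0 := by
    rw [Ne, ZMod.natCast_eq_zero_iff]; exact hch
  have hid : (m.choose (r+1) * (r+1) : ℕ) = m.choose r * (m - r) :=
    Nat.choose_succ_right_eq m r
  have hidF : ((m.choose (r+1) : ℕ) : ZMod p) * ((r+1 : ℕ) : ZMod p)
      = ((m.choose r : ℕ) : ZMod p) * ((m - r : ℕ) : ZMod p) := by
    exact_mod_cast congrArg (Nat.cast : ℕ → ZMod p) hid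
  rw [← heq] at hidF
  have := mul_left_cancel₀ hch0 hidF
  have hv := congrArg ZMod.val this
  rw [ZMod.val_cast_of_lt (by omega), ZMod.val_cast_of_lt (by omega)] at hv
  omega

lemma EH_main {p : ℕ} [Fact p.Prime] (A : Finset (ZMod p)) (hk : 3 ≤ A.card)
    (hlt : 2 * A.card - 3 < p) :
    2 * A.card - 3 ≤ (((A ×ˢ A).filter fun x => x.1 ≠ x.2).image fun x => x.1 + x.2).card := by
  by_contra hcon
  push_neg at hcon
  set Cs : Finset (ZMod p) := ((A ×ˢ A).filter fun x => x.1 ≠ x.2).image fun x => x.1 + x.2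
    with hCsdef
  set k := A.card with hkdef
  set m := Cs.card with hmdef
  -- m ≥ k - 1
  have hmk : k - 1 ≤ m := by
    obtain ⟨a, haA⟩ : A.Nonempty := Finset.card_pos.mp (by omega)
    have hsub : (A.erase a).image (fun b => a + b) ⊆ Cs := by
      intro x hx
      obtain ⟨b, hb, rfl⟩ := Finset.mem_image.mp hx
      refine Finset.mem_image.mpr ⟨(a, b), Finset.mem_filter.mpr ⟨Finset.mem_product.mpr
        ⟨haA, Finset.mem_of_mem_erase hb⟩, ?_⟩, rfl⟩
      exact fun h => (Finset.ne_of_mem_erase hb) h.symm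
    calc k - 1 = ((A.erase a).image (fun b => a + b)).card := by
          rw [Finset.card_image_of_injective _ (add_right_injective a),
            Finset.card_erase_of_mem haA]
      _ ≤ m := Finset.card_le_card hsub
  have hmlt : m < p := by omega
  set i : ℕ := k - 1 with hidef
  set j : ℕ := m + 2 - k with hjdef
  have hij : i + j = m + 1 := by omega
  have hi2 : 2 ≤ i := by omega
  have hj1 : 1 ≤ j := by omega
  have hjk : j ≤ k - 2 := by omega
  set P : (ZMod p)[X][X] := ∏ c ∈ Cs, (C X + X - C (C c)) with hPdef
  set f : (ZMod p)[X][X] := (C X - X) * P with hfdef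
  -- high coefficients vanish
  have hf_high : ∀ i' j', m + 1 < i' + j' → cf f i' j' = 0 := by
    intro i' j' h
    rw [hfdef, cf_mul_factor']
    rcases Nat.eq_zero_or_pos i' with hi' | hi' <;> rcases Nat.eq_zero_or_pos j' with hj' | hj'
    · omega
    · rw [if_pos hi', if_neg (by omega), cf_prod_gt _ _ _ (by omega)]; ring
    · rw [if_neg (by omega), if_pos hj', cf_prod_gt _ _ _ (by omega)]; ring
    · rw [if_neg (by omega), if_neg (by omega), cf_prod_gt _ _ _ (by omega),
        cf_prod_gt _ _ _ (by omega)]; ring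
  -- target coefficient
  have hf_target : cf f i j = (m.choose (i-1) : ZMod p) - (m.choose i : ZMod p) := by
    rw [hfdef, cf_mul_factor', if_neg (by omega), if_neg (by omega),
      cf_prod_eq _ _ _ (by omega), cf_prod_eq _ _ _ (by omega)]
  have hf_target_ne : cf f i j ≠ 0 := by
    rw [hf_target, sub_ne_zero]
    have hne := choose_cast_ne (p := p) (m := m) (r := i - 1) (by omega) (by omega) (by omega)
    have hii : i - 1 + 1 = i := by omega
    rw [hii] at hne
    exact hne
  -- the grid polynomial phi
  set φ : (ZMod p)[X] := ∏ a ∈ A, (X - C a) with hφdef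
  have hφm : φ.Monic := monic_prod_of_monic _ _ fun a _ => monic_X_sub_C a
  have hφd : φ.natDegree = k := by
    rw [hφdef, natDegree_prod_of_monic _ _ fun a _ => monic_X_sub_C a]
    simp [natDegree_X_sub_C]
    rfl
  have hφ1 : φ ≠ 1 := fun h => by simp [h] at hφd; omega
  have hφroot : ∀ a ∈ A, φ.eval a = 0 := by
    intro a ha
    rw [hφdef, eval_prod]
    exact Finset.prod_eq_zero ha (by simp)
  -- natDegree in y of f
  have hfy : f.natDegree < m + 2 := by
    rw [Nat.lt_succ_iff, natDegree_le_iff_coeff_eq_zero]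
    intro N hN
    exact Polynomial.ext fun i' => hf_high i' N (by omega)
  have hfexp : f = ∑ j' ∈ Finset.range (m+2), monomial j' (f.coeff j') := as_sum_range' f _ hfy
  -- vanishing of f on the grid
  have hvanish : ∀ a ∈ A, ∀ b ∈ A, (f.eval (C b)).eval a = 0 := by
    intro a ha b hb
    rw [hfdef, hPdef]
    simp only [eval_mul, eval_sub, eval_add, eval_C, eval_X, eval_prod]
    rcases eq_or_ne a b with rfl | hab
    · simp
    · have hmem : a + b ∈ Cs := Finset.mem_image.mpr ⟨(a, b),
        Finset.mem_filter.mpr ⟨Finset.mem_product.mpr ⟨ha, hb⟩, hab⟩, rfl⟩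
      rw [Finset.prod_eq_zero hmem (by simp)]
      ring
  -- expansion of the evaluation
  have heval_exp : ∀ a b : ZMod p, (f.eval (C b)).eval a
      = ∑ j' ∈ Finset.range (m+2), b ^ j' * (f.coeff j').eval a := by
    intro a b
    conv_lhs => rw [hfexp]
    rw [eval_finset_sum, eval_finset_sum]
    refine Finset.sum_congr rfl fun j' _ => ?_
    rw [eval_monomial, eval_mul, eval_pow, eval_C]
    ring
  -- the reduced one-variable polynomials
  have hmod_eval : ∀ j', ∀ a ∈ A, ((f.coeff j') %ₘ φ).eval a = (f.coeff j').eval a := by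
    intro j' a ha
    rw [modByMonic_eq_sub_mul_div _ φ, eval_sub, eval_mul, hφroot a ha]
    ring
  have hmod_deg : ∀ j', ((f.coeff j') %ₘ φ).natDegree < k :=
    fun j' => hφd ▸ natDegree_modByMonic_lt _ hφm hφ1
  -- gb = 0 for b in A
  have hgb : ∀ b ∈ A, (∑ j' ∈ Finset.range (m+2), b ^ j' • ((f.coeff j') %ₘ φ)) = 0 := by
    intro b hb
    refine eq_zero_of_natDegree_lt_card_of_eval_eq_zero' _ A (fun a ha => ?_) ?_
    · rw [eval_finset_sum]
      have : ∀ j' ∈ Finset.range (m+2), (b ^ j' • ((f.coeff j') %ₘ φ)).eval a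
          = b ^ j' * (f.coeff j').eval a := by
        intro j' _
        rw [smul_eq_C_mul, eval_mul, eval_C, hmod_eval j' a ha]
      rw [Finset.sum_congr rfl this, ← heval_exp, hvanish a ha b hb]
    · calc (∑ j' ∈ Finset.range (m+2), b ^ j' • ((f.coeff j') %ₘ φ)).natDegree
          ≤ k - 1 := natDegree_sum_le_of_forall_le _ _ fun j' _ =>
            le_trans (natDegree_smul_le _ _) (by have := hmod_deg j'; omega)
      _ < A.card := by omega
  -- the coefficient-extraction polynomial G
  set G : (ZMod p)[X] :=
    ∑ j' ∈ Finset.range (m+2), C (((f.coeff j') %ₘ φ).coeff (k-1)) * X ^ j' with hGdef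
  have hGeval : ∀ b ∈ A, G.eval b = 0 := by
    intro b hb
    have h0 := congrArg (fun q => Polynomial.coeff q (k-1)) (hgb b hb)
    simp only [finset_sum_coeff, Polynomial.coeff_smul, coeff_zero, smul_eq_mul] at h0
    rw [hGdef, eval_finset_sum]
    simp only [eval_mul, eval_C, eval_pow, eval_X]
    rw [← h0]
    exact Finset.sum_congr rfl fun j' _ => by ring
  have hGcoeff : ∀ n, G.coeff n
      = if n < m + 2 then ((f.coeff n) %ₘ φ).coeff (k-1) else 0 := by
    intro n
    rw [hGdef, finset_sum_coeff]
    simp only [coeff_C_mul, coeff_X_pow, mul_ite, mul_one, mul_zero]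
    rw [Finset.sum_ite_eq (Finset.range (m+2)) n]
    simp [Finset.mem_range]
  -- for j' with natDegree small, mod is identity
  have hself : ∀ j', (f.coeff j').natDegree + j' ≤ m + 1 → j' + k ≥ m + 2 →
      ((f.coeff j') %ₘ φ) = f.coeff j' := by
    intro j' hd hjk'
    rw [modByMonic_eq_self_iff hφm]
    calc (f.coeff j').degree ≤ ((f.coeff j').natDegree : WithBot ℕ) := degree_le_natDegree
      _ < (k : WithBot ℕ) := by exact_mod_cast (by omega : (f.coeff j').natDegree < k)
      _ = φ.degree := by rw [degree_eq_natDegree hφm.ne_zero, hφd]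
  have hfjdeg : ∀ j', j' ≤ m + 1 → (f.coeff j').natDegree + j' ≤ m + 1 := by
    intro j' hj'
    have : (f.coeff j').natDegree ≤ m + 1 - j' := by
      rw [natDegree_le_iff_coeff_eq_zero]
      intro N hN
      exact hf_high N j' (by omega)
    omega
  -- G has small degree
  have hGdeg : G.natDegree < A.card := by
    have : G.natDegree ≤ k - 1 := by
      rw [natDegree_le_iff_coeff_eq_zero]
      intro N hN
      rw [hGcoeff N]
      by_cases hN2 : N < m + 2
      · rw [if_pos hN2, hself N (hfjdeg N (by omega)) (by omega)]
        apply coeff_eq_zero_of_natDegree_lt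
        have := hfjdeg N (by omega)
        omega
      · rw [if_neg hN2]
    omega
  have hG0 : G = 0 := eq_zero_of_natDegree_lt_card_of_eval_eq_zero' G A hGeval hGdeg
  -- contradiction via the target coefficient
  have hcontr := hGcoeff j
  rw [hG0, coeff_zero, if_pos (by omega), hself j (hfjdeg j (by omega)) (by omega)] at hcontr
  have hik : k - 1 = i := rfl
  exact hf_target_ne (by rw [← hcontr.symm]; rfl)

lemma EH_large {p : ℕ} [Fact p.Prime] (A : Finset (ZMod p)) (hk : 3 ≤ A.card)
    (hple : p ≤ 2 * A.card - 3) :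
    (((A ×ˢ A).filter fun x => x.1 ≠ x.2).image fun x => x.1 + x.2) = Finset.univ := by
  have hkp : A.card ≤ p := by
    simpa [ZMod.card] using Finset.card_le_univ A
  have hp3 : 3 ≤ p := by omega
  have h2 : (2 : ZMod p) ≠ 0 := by
    have : ((2 : ℕ) : ZMod p) ≠ 0 := by
      rw [Ne, ZMod.natCast_eq_zero_iff]
      intro hd
      have := Nat.le_of_dvd (by norm_num) hd
      omega
    exact_mod_cast this
  apply Finset.eq_univ_of_forall
  intro c
  set B : Finset (ZMod p) := A.image (fun x => c - x) with hBdef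
  have hB : B.card = A.card := Finset.card_image_of_injective _ sub_right_injective
  have hcap : 2 ≤ (A ∩ B).card := by
    have h1 := Finset.card_union_add_card_inter A B
    have h2 : (A ∪ B).card ≤ p := by
      simpa [ZMod.card] using Finset.card_le_univ (A ∪ B)
    omega
  obtain ⟨x, hx, y, hy, hxy⟩ := Finset.one_lt_card.mp (by omega : 1 < (A ∩ B).card)
  have hmem : ∀ z ∈ A ∩ B, z ∈ A ∧ c - z ∈ A := by
    intro z hz
    obtain ⟨hzA, hzB⟩ := Finset.mem_inter.mp hz
    obtain ⟨w, hw, hwz⟩ := Finset.mem_image.mp hzB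
    exact ⟨hzA, by rw [← hwz, sub_sub_cancel]; exact hw⟩
  have key : ∃ z, z ∈ A ∧ c - z ∈ A ∧ z ≠ c - z := by
    by_cases hxc : x = c - x
    · refine ⟨y, (hmem y hy).1, (hmem y hy).2, ?_⟩
      intro hyc
      apply hxy
      have hx2 : x + x = c := (sub_eq_iff_eq_add.mp hxc.symm).symm
      have hy2 : y + y = c := (sub_eq_iff_eq_add.mp hyc.symm).symm
      have : (2 : ZMod p) * x = 2 * y := by
        rw [two_mul, two_mul, hx2, hy2]
      exact mul_left_cancel₀ h2 this
    · exact ⟨x, (hmem x hx).1, (hmem x hx).2, hxc⟩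
  obtain ⟨z, hzA, hczA, hzne⟩ := key
  refine Finset.mem_image.mpr ⟨(z, c - z), Finset.mem_filter.mpr
    ⟨Finset.mem_product.mpr ⟨hzA, hczA⟩, hzne⟩, by ring⟩

theorem stmt_7 (p : ℕ) (hp : p.Prime) (A : Finset (ZMod p)) (hA : A.Nonempty) :
    min (p : ℤ) (2 * A.card - 3) ≤
      ((((A ×ˢ A).filter fun x => x.1 ≠ x.2).image fun x => x.1 + x.2).card : ℤ) := by
  haveI : Fact p.Prime := ⟨hp⟩
  set Cs : Finset (ZMod p) := ((A ×ˢ A).filter fun x => x.1 ≠ x.2).image fun x => x.1 + x.2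
    with hCsdef
  by_cases hk : 3 ≤ A.card
  · by_cases hple : p ≤ 2 * A.card - 3
    · have := EH_large A hk hple
      have hcard : Cs.card = p := by
        rw [hCsdef, this, Finset.card_univ, ZMod.card]
      rw [hcard]
      exact min_le_left _ _
    · have hmain := EH_main A hk (by omega)
      refine le_trans (min_le_right _ _) ?_
      have : ((2 * A.card - 3 : ℕ) : ℤ) ≤ (Cs.card : ℤ) := by exact_mod_cast hmain
      have h3 : (3 : ℤ) ≤ A.card := by exact_mod_cast hk
      push_cast at this
      omega
  · -- A.card ≤ 2
    refine le_trans (min_le_right _ _) ?_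
    by_cases h2 : A.card = 2
    · have : 1 ≤ Cs.card := by
        obtain ⟨x, hx, y, hy, hxy⟩ := Finset.one_lt_card.mp (by omega : 1 < A.card)
        have : x + y ∈ Cs := Finset.mem_image.mpr ⟨(x, y), Finset.mem_filter.mpr
          ⟨Finset.mem_product.mpr ⟨hx, hy⟩, hxy⟩, rfl⟩
        exact Finset.card_pos.mpr ⟨_, this⟩
      have : (1 : ℤ) ≤ Cs.card := by exact_mod_cast this
      rw [h2]
      omega
    · have h1 : A.card = 1 := by
        have := Finset.card_pos.mpr hA
        omega
      rw [h1]
      have : (0 : ℤ) ≤ Cs.card := by positivity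
      omega
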